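/- arXiv:2404.17947 — 3 statements merged into one kernel-verified Lean document; each statement's English description precedes it below -/
import Mathlib

section
/- Consider an L-layer GCN as below, where Ã ∈ ℝ^{n×n} has nonnegative entries. Let X, X' ∈ ℝ^{n×K} be two feature matrices such that ‖X_v − X'_v‖_∞ ≤ ε for every row (node) v. Then for every node u, the rows of the outputs satisfy ‖F_Ã(X)_u − F_Ã(X')_u‖_∞ ≤ (∏_{ℓ=1}^{L} ‖W^{(ℓ)}‖_∞) · ε · ŵ_u. -/
open scoped BigOperators

/-- An `L`-layer GCN: `H⁽⁰⁾ = X` and `H⁽ˡ⁺¹⁾ = φ⁽ˡ⁺¹⁾(Ã H⁽ˡ⁾ W⁽ˡ⁺¹⁾)`, with the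
activation applied entrywise.  `d ℓ` is the embedding dimension at layer `ℓ` and the
weight matrix of layer `ℓ+1` is `W ℓ : ℝ^{d ℓ × d (ℓ+1)}`. -/
noncomputable def gcn {n : ℕ} (d : ℕ → ℕ) (φ : ℕ → ℝ → ℝ)
    (A : Matrix (Fin n) (Fin n) ℝ)
    (W : (ℓ : ℕ) → Matrix (Fin (d ℓ)) (Fin (d (ℓ + 1))) ℝ)
    (X : Matrix (Fin n) (Fin (d 0)) ℝ) : (ℓ : ℕ) → Matrix (Fin n) (Fin (d ℓ)) ℝ
  | 0 => X
  | (ℓ + 1) => (A * gcn d φ A W X ℓ * W ℓ).map (φ (ℓ + 1))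

/-- The operator norm of the map `h ↦ hW` on row vectors with respect to the `ℓ∞`
norm: the maximum absolute column sum of `W`. -/
noncomputable def opNormInf {m e : ℕ} (W : Matrix (Fin m) (Fin e) ℝ) : ℝ :=
  ⨆ j : Fin e, ∑ i : Fin m, |W i j|

lemma colsum_le_opNormInf {m e : ℕ} (W : Matrix (Fin m) (Fin e) ℝ) (j : Fin e) :
    ∑ i : Fin m, |W i j| ≤ opNormInf W :=
  le_ciSup (f := fun j : Fin e => ∑ i : Fin m, |W i j|) (Set.Finite.bddAbove (Set.finite_range _)) j

lemma opNormInf_nonneg {m e : ℕ} (W : Matrix (Fin m) (Fin e) ℝ) : 0 ≤ opNormInf W :=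
  Real.iSup_nonneg fun j => Finset.sum_nonneg fun i _ => abs_nonneg _

lemma pow_entry_nonneg {n : ℕ} (A : Matrix (Fin n) (Fin n) ℝ)
    (hA : ∀ i j, 0 ≤ A i j) (L : ℕ) : ∀ i j, 0 ≤ (A ^ L) i j := by
  induction L with
  | zero =>
    intro i j
    rw [pow_zero, Matrix.one_apply]
    split <;> norm_num
  | succ L ih =>
    intro i j
    rw [pow_succ, Matrix.mul_apply]
    exact Finset.sum_nonneg fun k _ => mul_nonneg (ih i k) (hA k j)


/-- Theorem 1 (ℓ∞ Lipschitz core, feature attacks on GCNs): if every row of the feature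
perturbation has `ℓ∞` norm at most `ε`, then every row `u` of the output of an `L`-layer
GCN moves in `ℓ∞` norm by at most `(∏ ℓ, ‖W⁽ˡ⁾‖_∞) · ε · ŵ_u`, where
`ŵ_u = ∑ v, (Ã^L)_{u v}` is the `u`-th row sum of `Ã^L`. -/
theorem gcn_feature_attack_linf_bound
    {n : ℕ} (L : ℕ) (d : ℕ → ℕ) (φ : ℕ → ℝ → ℝ)
    (A : Matrix (Fin n) (Fin n) ℝ) (hA : ∀ i j, 0 ≤ A i j)
    (W : (ℓ : ℕ) → Matrix (Fin (d ℓ)) (Fin (d (ℓ + 1))) ℝ)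
    (hφ : ∀ ℓ, LipschitzWith 1 (φ ℓ))
    (X X' : Matrix (Fin n) (Fin (d 0)) ℝ) (ε : ℝ)
    (hX : ∀ v : Fin n, ‖X v - X' v‖ ≤ ε) :
    ∀ u : Fin n,
      ‖gcn d φ A W X L u - gcn d φ A W X' L u‖ ≤
        (∏ ℓ ∈ Finset.range L, opNormInf (W ℓ)) * ε * (∑ v : Fin n, (A ^ L) u v) := by
  induction L with
  | zero =>
    intro u
    simp only [gcn, Finset.range_zero, Finset.prod_empty, pow_zero, one_mul]
    have : (∑ v : Fin n, (1 : Matrix (Fin n) (Fin n) ℝ) u v) = 1 := by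
      simp [Matrix.one_apply]
    rw [this, mul_one]
    exact hX u
  | succ L ih =>
    intro u
    have hε : 0 ≤ ε := (norm_nonneg _).trans (hX u)
    set C := ∏ ℓ ∈ Finset.range L, opNormInf (W ℓ) with hCdef
    have hC : 0 ≤ C := Finset.prod_nonneg fun _ _ => opNormInf_nonneg _
    set G := gcn d φ A W X L with hG
    set G' := gcn d φ A W X' L with hG'
    set S : ℝ := ∑ v : Fin n, A u v * (C * ε * ∑ w : Fin n, (A ^ L) v w) with hSdef
    have hS0 : 0 ≤ S := Finset.sum_nonneg fun v _ => mul_nonneg (hA u v)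
      (mul_nonneg (mul_nonneg hC hε) (Finset.sum_nonneg fun w _ => pow_entry_nonneg A hA L v w))
    have hmid : ∀ k : Fin (d L), |(A * G) u k - (A * G') u k| ≤ S := by
      intro k
      rw [Matrix.mul_apply, Matrix.mul_apply, ← Finset.sum_sub_distrib]
      refine (Finset.abs_sum_le_sum_abs _ _).trans (Finset.sum_le_sum fun v _ => ?_)
      have h1 : |A u v * G v k - A u v * G' v k| = A u v * |G v k - G' v k| := by
        rw [← mul_sub, abs_mul, abs_of_nonneg (hA u v)]
      rw [h1]
      refine mul_le_mul_of_nonneg_left ?_ (hA u v)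
      calc |G v k - G' v k| = ‖(G v - G' v) k‖ := by simp [Real.norm_eq_abs]
        _ ≤ ‖G v - G' v‖ := norm_le_pi_norm _ k
        _ ≤ C * ε * ∑ w : Fin n, (A ^ L) v w := ih v
    -- row sum identity
    have hrowsum : (∑ w : Fin n, (A ^ (L + 1)) u w)
        = ∑ v : Fin n, A u v * ∑ w : Fin n, (A ^ L) v w := by
      simp only [pow_succ', Matrix.mul_apply]
      rw [Finset.sum_comm]
      simp [Finset.mul_sum]
    have hRHS : S * opNormInf (W L)
        = (C * opNormInf (W L)) * ε * (∑ w : Fin n, (A ^ (L + 1)) u w) := by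
      rw [hrowsum, Finset.mul_sum, Finset.sum_mul]
      apply Finset.sum_congr rfl
      intros; ring
    have hRHS0 : 0 ≤ (C * opNormInf (W L)) * ε * (∑ w : Fin n, (A ^ (L + 1)) u w) := by
      rw [← hRHS]; exact mul_nonneg hS0 (opNormInf_nonneg _)
    rw [Finset.prod_range_succ]
    rw [show gcn d φ A W X (L + 1) = (A * G * W L).map (φ (L + 1)) from rfl,
        show gcn d φ A W X' (L + 1) = (A * G' * W L).map (φ (L + 1)) from rfl]
    refine (pi_norm_le_iff_of_nonneg hRHS0).2 fun i => ?_
    simp only [Pi.sub_apply, Matrix.map_apply, Real.norm_eq_abs]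
    have hlip : |φ (L + 1) ((A * G * W L) u i) - φ (L + 1) ((A * G' * W L) u i)|
        ≤ |(A * G * W L) u i - (A * G' * W L) u i| := by
      have := (hφ (L + 1)).dist_le_mul ((A * G * W L) u i) ((A * G' * W L) u i)
      simpa [Real.dist_eq] using this
    refine hlip.trans ?_
    rw [← hRHS]
    calc |(A * G * W L) u i - (A * G' * W L) u i|
        = |∑ k, ((A * G) u k - (A * G') u k) * W L k i| := by
          rw [Matrix.mul_apply, Matrix.mul_apply, ← Finset.sum_sub_distrib]
          congr 1; apply Finset.sum_congr rfl; intros; ring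
      _ ≤ ∑ k, |(A * G) u k - (A * G') u k| * |W L k i| := by
          refine (Finset.abs_sum_le_sum_abs _ _).trans (Finset.sum_le_sum fun k _ => ?_)
          rw [abs_mul]
      _ ≤ ∑ k, S * |W L k i| :=
          Finset.sum_le_sum fun k _ => mul_le_mul_of_nonneg_right (hmid k) (abs_nonneg _)
      _ = S * ∑ k, |W L k i| := by rw [Finset.mul_sum]
      _ ≤ S * opNormInf (W L) := mul_le_mul_of_nonneg_left (colsum_le_opNormInf _ i) hS0
end

section
/- Consider an L-layer GCN as below, where Ã ∈ ℝ^{n×n} is symmetric with nonnegative entries. Let X, X' ∈ ℝ^{n×K} be two feature matrices such that ‖X_v − X'_v‖₁ ≤ ε for every row (node) v. Then the total ℓ¹ deviation of the outputs satisfies Σ_u ‖F_Ã(X)_u − F_Ã(X')_u‖₁ ≤ (∏_{ℓ=1}^{L} ‖W^{(ℓ)}‖₁) · ε · Σ_u ŵ_u. -/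
open scoped BigOperators

/-- The `ℓ¹` norm of a row vector. -/
noncomputable def l1Norm {m : ℕ} (v : Fin m → ℝ) : ℝ := ∑ j : Fin m, |v j|

/-- The operator norm of the map `h ↦ hW` on row vectors with respect to the `ℓ¹`
norm: the maximum absolute row sum of `W`. -/
noncomputable def opNormOne {m e : ℕ} (W : Matrix (Fin m) (Fin e) ℝ) : ℝ :=
  ⨆ i : Fin m, ∑ j : Fin e, |W i j|

lemma opNormOne_nonneg {m e : ℕ} (W : Matrix (Fin m) (Fin e) ℝ) : 0 ≤ opNormOne W :=
  Real.iSup_nonneg fun i => Finset.sum_nonneg fun j _ => abs_nonneg _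

lemma row_sum_le_opNormOne {m e : ℕ} (W : Matrix (Fin m) (Fin e) ℝ) (k : Fin m) :
    ∑ j : Fin e, |W k j| ≤ opNormOne W := by
  exact le_ciSup (f := fun i : Fin m => ∑ j : Fin e, |W i j|)
    (Set.Finite.bddAbove (Set.finite_range _)) k

/-- Row-wise bound for one layer. -/
lemma layer_row_bound {n m e : ℕ} (A : Matrix (Fin n) (Fin n) ℝ) (hA : ∀ i j, 0 ≤ A i j)
    (H H' : Matrix (Fin n) (Fin m) ℝ) (W : Matrix (Fin m) (Fin e) ℝ)
    (φ : ℝ → ℝ) (hφ : LipschitzWith 1 φ) (u : Fin n) :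
    l1Norm ((A * H * W).map φ u - (A * H' * W).map φ u) ≤
      opNormOne W * ∑ v : Fin n, A u v * l1Norm (H v - H' v) := by
  have h1 : l1Norm ((A * H * W).map φ u - (A * H' * W).map φ u) ≤
      ∑ j : Fin e, |(A * H * W) u j - (A * H' * W) u j| := by
    unfold l1Norm
    refine Finset.sum_le_sum fun j _ => ?_
    have := hφ.dist_le_mul ((A * H * W) u j) ((A * H' * W) u j)
    simpa [Matrix.map_apply, Real.dist_eq] using this
  have h2 : ∑ j : Fin e, |(A * H * W) u j - (A * H' * W) u j| ≤
      ∑ k : Fin m, |(A * H) u k - (A * H') u k| * (∑ j : Fin e, |W k j|) := by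
    calc ∑ j : Fin e, |(A * H * W) u j - (A * H' * W) u j|
        ≤ ∑ j : Fin e, ∑ k : Fin m, |(A * H) u k - (A * H') u k| * |W k j| := by
          refine Finset.sum_le_sum fun j _ => ?_
          rw [Matrix.mul_apply, Matrix.mul_apply, ← Finset.sum_sub_distrib]
          refine (Finset.abs_sum_le_sum_abs _ _).trans (le_of_eq ?_)
          refine Finset.sum_congr rfl fun k _ => ?_
          rw [← sub_mul, abs_mul]
      _ = ∑ k : Fin m, |(A * H) u k - (A * H') u k| * (∑ j : Fin e, |W k j|) := by
          rw [Finset.sum_comm]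
          simp [Finset.mul_sum]
  have h3 : ∑ k : Fin m, |(A * H) u k - (A * H') u k| * (∑ j : Fin e, |W k j|) ≤
      opNormOne W * ∑ k : Fin m, |(A * H) u k - (A * H') u k| := by
    rw [Finset.mul_sum]
    refine Finset.sum_le_sum fun k _ => ?_
    rw [mul_comm (opNormOne W)]
    exact mul_le_mul_of_nonneg_left (row_sum_le_opNormOne W k) (abs_nonneg _)
  have h4 : ∑ k : Fin m, |(A * H) u k - (A * H') u k| ≤
      ∑ v : Fin n, A u v * l1Norm (H v - H' v) := by
    calc ∑ k : Fin m, |(A * H) u k - (A * H') u k|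
        ≤ ∑ k : Fin m, ∑ v : Fin n, A u v * |H v k - H' v k| := by
          refine Finset.sum_le_sum fun k _ => ?_
          rw [Matrix.mul_apply, Matrix.mul_apply, ← Finset.sum_sub_distrib]
          refine (Finset.abs_sum_le_sum_abs _ _).trans ?_
          refine Finset.sum_le_sum fun v _ => ?_
          rw [← mul_sub, abs_mul, abs_of_nonneg (hA u v)]
      _ = ∑ v : Fin n, A u v * l1Norm (H v - H' v) := by
          rw [Finset.sum_comm]
          unfold l1Norm
          simp [Finset.mul_sum]
  calc l1Norm ((A * H * W).map φ u - (A * H' * W).map φ u)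
      ≤ opNormOne W * ∑ k : Fin m, |(A * H) u k - (A * H') u k| := (h1.trans h2).trans h3
    _ ≤ opNormOne W * ∑ v : Fin n, A u v * l1Norm (H v - H' v) :=
        mul_le_mul_of_nonneg_left h4 (opNormOne_nonneg W)

/-- Main induction, generalized over nonnegative node weights `c`. -/
lemma gcn_weighted_bound {n : ℕ} (d : ℕ → ℕ) (φ : ℕ → ℝ → ℝ)
    (A : Matrix (Fin n) (Fin n) ℝ) (hA : ∀ i j, 0 ≤ A i j)
    (W : (ℓ : ℕ) → Matrix (Fin (d ℓ)) (Fin (d (ℓ + 1))) ℝ)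
    (hφ : ∀ ℓ, LipschitzWith 1 (φ ℓ))
    (X X' : Matrix (Fin n) (Fin (d 0)) ℝ) (ε : ℝ)
    (hX : ∀ v : Fin n, l1Norm (X v - X' v) ≤ ε) :
    ∀ (L : ℕ) (c : Fin n → ℝ), (∀ u, 0 ≤ c u) →
    ∑ u : Fin n, c u * l1Norm (gcn d φ A W X L u - gcn d φ A W X' L u) ≤
      (∏ ℓ ∈ Finset.range L, opNormOne (W ℓ)) * ε *
        (∑ u : Fin n, c u * ∑ v : Fin n, (A ^ L) u v) := by
  intro L
  induction L with
  | zero =>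
    intro c hc
    simp only [pow_zero, Finset.range_zero, Finset.prod_empty, one_mul]
    have : ∀ u : Fin n, c u * ∑ v : Fin n, (1 : Matrix (Fin n) (Fin n) ℝ) u v = c u := by
      intro u
      simp [Matrix.one_apply]
    simp only [this]
    rw [Finset.mul_sum]
    refine Finset.sum_le_sum fun u _ => ?_
    rw [mul_comm ε]
    exact mul_le_mul_of_nonneg_left (hX u) (hc u)
  | succ L ih =>
    intro c hc
    have step : ∑ u : Fin n, c u * l1Norm (gcn d φ A W X (L+1) u - gcn d φ A W X' (L+1) u) ≤
        opNormOne (W L) * ∑ v : Fin n, (∑ u : Fin n, c u * A u v) *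
          l1Norm (gcn d φ A W X L v - gcn d φ A W X' L v) := by
      calc ∑ u : Fin n, c u * l1Norm (gcn d φ A W X (L+1) u - gcn d φ A W X' (L+1) u)
          ≤ ∑ u : Fin n, c u * (opNormOne (W L) *
              ∑ v : Fin n, A u v * l1Norm (gcn d φ A W X L v - gcn d φ A W X' L v)) := by
            refine Finset.sum_le_sum fun u _ => ?_
            exact mul_le_mul_of_nonneg_left
              (layer_row_bound A hA _ _ (W L) (φ (L+1)) (hφ (L+1)) u) (hc u)
        _ = opNormOne (W L) * ∑ v : Fin n, (∑ u : Fin n, c u * A u v) *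
              l1Norm (gcn d φ A W X L v - gcn d φ A W X' L v) := by
            simp only [Finset.mul_sum, Finset.sum_mul]
            rw [Finset.sum_comm]
            exact Finset.sum_congr rfl fun u _ => Finset.sum_congr rfl fun v _ => by ring
    have hc' : ∀ v, 0 ≤ ∑ u : Fin n, c u * A u v := fun v =>
      Finset.sum_nonneg fun u _ => mul_nonneg (hc u) (hA u v)
    have ihc := ih (fun v => ∑ u : Fin n, c u * A u v) hc'
    have key : ∑ v : Fin n, (∑ u : Fin n, c u * A u v) * ∑ w : Fin n, (A ^ L) v w =
        ∑ u : Fin n, c u * ∑ w : Fin n, (A ^ (L+1)) u w := by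
      have hpow : ∀ u w, (A ^ (L+1)) u w = ∑ v : Fin n, A u v * (A ^ L) v w := by
        intro u w
        rw [pow_succ']
        rfl
      calc ∑ v : Fin n, (∑ u : Fin n, c u * A u v) * ∑ w : Fin n, (A ^ L) v w
          = ∑ v : Fin n, ∑ u : Fin n, ∑ w : Fin n, c u * A u v * (A ^ L) v w := by
            refine Finset.sum_congr rfl fun v _ => ?_
            rw [Finset.sum_mul]
            exact Finset.sum_congr rfl fun u _ => by rw [Finset.mul_sum]
        _ = ∑ u : Fin n, ∑ v : Fin n, ∑ w : Fin n, c u * A u v * (A ^ L) v w :=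
            Finset.sum_comm
        _ = ∑ u : Fin n, c u * ∑ w : Fin n, (A ^ (L+1)) u w := by
            refine Finset.sum_congr rfl fun u _ => ?_
            rw [Finset.mul_sum, Finset.sum_comm]
            refine Finset.sum_congr rfl fun w _ => ?_
            rw [hpow, Finset.mul_sum]
            exact Finset.sum_congr rfl fun v _ => by ring
    calc ∑ u : Fin n, c u * l1Norm (gcn d φ A W X (L+1) u - gcn d φ A W X' (L+1) u)
        ≤ opNormOne (W L) * ∑ v : Fin n, (∑ u : Fin n, c u * A u v) *
            l1Norm (gcn d φ A W X L v - gcn d φ A W X' L v) := step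
      _ ≤ opNormOne (W L) * ((∏ ℓ ∈ Finset.range L, opNormOne (W ℓ)) * ε *
            ∑ v : Fin n, (∑ u : Fin n, c u * A u v) * ∑ w : Fin n, (A ^ L) v w) :=
          mul_le_mul_of_nonneg_left ihc (opNormOne_nonneg (W L))
      _ = (∏ ℓ ∈ Finset.range (L+1), opNormOne (W ℓ)) * ε *
            (∑ u : Fin n, c u * ∑ w : Fin n, (A ^ (L+1)) u w) := by
          rw [key, Finset.prod_range_succ]
          ring

/-- Theorem 1 (ℓ¹ part, feature attacks on GCNs): for a symmetric nonnegative `Ã`, if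
every row of the feature perturbation has `ℓ¹` norm at most `ε`, then the total `ℓ¹`
deviation of the output of an `L`-layer GCN is at most
`(∏ ℓ, ‖W⁽ˡ⁾‖₁) · ε · ∑ u, ŵ_u`, where `ŵ_u = ∑ v, (Ã^L)_{u v}`. -/
theorem gcn_feature_attack_l1_bound
    {n : ℕ} (L : ℕ) (d : ℕ → ℕ) (φ : ℕ → ℝ → ℝ)
    (A : Matrix (Fin n) (Fin n) ℝ) (hA : ∀ i j, 0 ≤ A i j) (hAsymm : A.IsSymm)
    (W : (ℓ : ℕ) → Matrix (Fin (d ℓ)) (Fin (d (ℓ + 1))) ℝ)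
    (hφ : ∀ ℓ, LipschitzWith 1 (φ ℓ))
    (X X' : Matrix (Fin n) (Fin (d 0)) ℝ) (ε : ℝ)
    (hX : ∀ v : Fin n, l1Norm (X v - X' v) ≤ ε) :
    ∑ u : Fin n, l1Norm (gcn d φ A W X L u - gcn d φ A W X' L u) ≤
      (∏ ℓ ∈ Finset.range L, opNormOne (W ℓ)) * ε *
        (∑ u : Fin n, ∑ v : Fin n, (A ^ L) u v) := by
  have := gcn_weighted_bound d φ A hA W hφ X X' ε hX L (fun _ => 1) (fun _ => zero_le_one)
  simpa using this
end

section
/- Consider an L-layer GCN as below, with each activation additionally satisfying φ^{(ℓ)}(0) = 0 and with every weight matrix satisfying ‖W^{(ℓ)}‖₂ ≥ 1. Let Ã, Ã' ∈ ℝ^{n×n} satisfy ‖Ã‖₂ ≤ 1, ‖Ã'‖₂ ≤ 1, and ‖Ã − Ã'‖₂ ≤ ε. Then for every X ∈ ℝ^{n×K}: ‖F_Ã(X) − F_{Ã'}(X)‖_F ≤ (∏_{ℓ=1}^{L} ‖W^{(ℓ)}‖₂) · ‖X‖_F · ε · (1 + L · ∏_{ℓ=1}^{L} ‖W^{(ℓ)}‖₂).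 -/
open scoped BigOperators

/-- The Frobenius norm of a real matrix. -/
noncomputable def frob {n m : ℕ} (M : Matrix (Fin n) (Fin m) ℝ) : ℝ :=
  Real.sqrt (∑ i : Fin n, ∑ j : Fin m, (M i j) ^ 2)

/-- The spectral norm (operator norm induced by the Euclidean vector norm) of a real
matrix. -/
noncomputable def spec {n m : ℕ} (M : Matrix (Fin n) (Fin m) ℝ) : ℝ :=
  ‖LinearMap.toContinuousLinearMap (Matrix.toEuclideanLin M)‖

open Matrix in
lemma frob_nonneg {n m : ℕ} (M : Matrix (Fin n) (Fin m) ℝ) : 0 ≤ frob M :=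
  Real.sqrt_nonneg _

lemma spec_nonneg {n m : ℕ} (M : Matrix (Fin n) (Fin m) ℝ) : 0 ≤ spec M :=
  norm_nonneg _

lemma frob_eq_norm {n m : ℕ} (M : Matrix (Fin n) (Fin m) ℝ) :
    frob M = @norm _ (Matrix.frobeniusNormedAddCommGroup).toNorm M := by
  rw [Matrix.frobenius_norm_def, ← Real.sqrt_eq_rpow, frob]
  congr 1
  refine Finset.sum_congr rfl fun i _ => Finset.sum_congr rfl fun j _ => ?_
  rw [Real.rpow_two, Real.norm_eq_abs, sq_abs]

lemma frob_add_le {n m : ℕ} (M N : Matrix (Fin n) (Fin m) ℝ) :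
    frob (M + N) ≤ frob M + frob N := by
  letI := Matrix.frobeniusNormedAddCommGroup (α := ℝ) (m := Fin n) (n := Fin m)
  simp only [frob_eq_norm]
  exact norm_add_le M N

lemma frob_mono {n m : ℕ} {M N : Matrix (Fin n) (Fin m) ℝ}
    (h : ∀ i j, |M i j| ≤ |N i j|) : frob M ≤ frob N := by
  apply Real.sqrt_le_sqrt
  refine Finset.sum_le_sum fun i _ => Finset.sum_le_sum fun j _ => ?_
  calc (M i j)^2 = |M i j|^2 := (sq_abs _).symm
  _ ≤ |N i j|^2 := by nlinarith [abs_nonneg (M i j), h i j]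
  _ = (N i j)^2 := sq_abs _

open Matrix in
lemma frob_transpose {n m : ℕ} (M : Matrix (Fin n) (Fin m) ℝ) : frob Mᵀ = frob M := by
  rw [frob, frob, Finset.sum_comm]; rfl

open Matrix in
lemma spec_transpose {n m : ℕ} (M : Matrix (Fin n) (Fin m) ℝ) : spec Mᵀ = spec M := by
  letI := Matrix.instL2OpNormedAddCommGroup (𝕜 := ℝ) (m := Fin n) (n := Fin m)
  letI := Matrix.instL2OpNormedAddCommGroup (𝕜 := ℝ) (m := Fin m) (n := Fin n)
  have h : Mᵀ = Mᴴ := by ext i j; simp [Matrix.conjTranspose_apply]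
  rw [h]
  exact Matrix.l2_opNorm_conjTranspose M

lemma spec_mulVec {a b : ℕ} (A : Matrix (Fin a) (Fin b) ℝ) (x : Fin b → ℝ) :
    Real.sqrt (∑ i, (A.mulVec x i) ^ 2) ≤ spec A * Real.sqrt (∑ j, (x j) ^ 2) := by
  have h := (LinearMap.toContinuousLinearMap (Matrix.toEuclideanLin A)).le_opNorm
    ((WithLp.equiv 2 (Fin b → ℝ)).symm x)
  have h1 : ‖((WithLp.equiv 2 (Fin b → ℝ)).symm x : EuclideanSpace ℝ (Fin b))‖
      = Real.sqrt (∑ j, (x j) ^ 2) := by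
    rw [EuclideanSpace.norm_eq]
    congr 1; refine Finset.sum_congr rfl fun j _ => ?_
    rw [Real.norm_eq_abs, sq_abs]; rfl
  have h2 : ‖LinearMap.toContinuousLinearMap (Matrix.toEuclideanLin A)
      ((WithLp.equiv 2 (Fin b → ℝ)).symm x)‖ = Real.sqrt (∑ i, (A.mulVec x i) ^ 2) := by
    have : LinearMap.toContinuousLinearMap (Matrix.toEuclideanLin A)
        ((WithLp.equiv 2 (Fin b → ℝ)).symm x)
        = (WithLp.equiv 2 (Fin a → ℝ)).symm (A.mulVec x) := rfl
    rw [this, EuclideanSpace.norm_eq]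
    congr 1; refine Finset.sum_congr rfl fun i _ => ?_
    rw [Real.norm_eq_abs, sq_abs]; rfl
  rw [h1, h2] at h
  exact h

open Matrix in
lemma frob_mul_left {a b c : ℕ} (A : Matrix (Fin a) (Fin b) ℝ)
    (M : Matrix (Fin b) (Fin c) ℝ) : frob (A * M) ≤ spec A * frob M := by
  have key : ∀ j : Fin c, ∑ i, ((A * M) i j) ^ 2 ≤ (spec A)^2 * ∑ k, (M k j) ^ 2 := by
    intro j
    have h := spec_mulVec A (fun k => M k j)
    have he : ∀ i, (A * M) i j = A.mulVec (fun k => M k j) i := by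
      intro i; simp [Matrix.mul_apply, Matrix.mulVec, dotProduct]
    have h1 : 0 ≤ ∑ i, (A.mulVec (fun k => M k j) i) ^ 2 :=
      Finset.sum_nonneg fun i _ => sq_nonneg _
    have h2 : 0 ≤ ∑ k, (M k j) ^ 2 := Finset.sum_nonneg fun k _ => sq_nonneg _
    calc ∑ i, ((A * M) i j) ^ 2 = ∑ i, (A.mulVec (fun k => M k j) i) ^ 2 := by
          simp_rw [he]
      _ = Real.sqrt (∑ i, (A.mulVec (fun k => M k j) i) ^ 2) ^ 2 := (Real.sq_sqrt h1).symm
      _ ≤ (spec A * Real.sqrt (∑ k, (M k j)^2)) ^ 2 := by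
          have hs := Real.sqrt_nonneg (∑ i, (A.mulVec (fun k => M k j) i) ^ 2)
          nlinarith
      _ = (spec A)^2 * ∑ k, (M k j) ^ 2 := by
          rw [mul_pow, Real.sq_sqrt h2]
  have h3 : ∑ i, ∑ j, ((A * M) i j)^2 ≤ (spec A)^2 * ∑ k, ∑ j, (M k j)^2 := by
    calc ∑ i, ∑ j, ((A * M) i j)^2 = ∑ j, ∑ i, ((A * M) i j)^2 := Finset.sum_comm
      _ ≤ ∑ j, (spec A)^2 * ∑ k, (M k j)^2 := Finset.sum_le_sum fun j _ => key j
      _ = (spec A)^2 * ∑ j, ∑ k, (M k j)^2 := (Finset.mul_sum _ _ _).symm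
      _ = (spec A)^2 * ∑ k, ∑ j, (M k j)^2 := by rw [Finset.sum_comm]
  calc frob (A * M) ≤ Real.sqrt ((spec A)^2 * ∑ k, ∑ j, (M k j)^2) := Real.sqrt_le_sqrt h3
    _ = spec A * frob M := by
        rw [Real.sqrt_mul (sq_nonneg _), Real.sqrt_sq (spec_nonneg A), frob]

open Matrix in
lemma frob_mul_right {a b c : ℕ} (M : Matrix (Fin a) (Fin b) ℝ)
    (W : Matrix (Fin b) (Fin c) ℝ) : frob (M * W) ≤ frob M * spec W := by
  calc frob (M * W) = frob ((M * W)ᵀ) := (frob_transpose _).symm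
    _ = frob (Wᵀ * Mᵀ) := by rw [Matrix.transpose_mul]
    _ ≤ spec Wᵀ * frob Mᵀ := frob_mul_left _ _
    _ = frob M * spec W := by rw [spec_transpose, frob_transpose, mul_comm]

lemma frob_map_sub_le {a b : ℕ} {f : ℝ → ℝ} (hf : LipschitzWith 1 f)
    (M N : Matrix (Fin a) (Fin b) ℝ) :
    frob (M.map f - N.map f) ≤ frob (M - N) := by
  apply frob_mono
  intro i j
  have h := hf.dist_le_mul (M i j) (N i j)
  rw [NNReal.coe_one, one_mul, Real.dist_eq, Real.dist_eq] at h
  simpa [Matrix.map_apply, Matrix.sub_apply] using h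

lemma frob_map_le {a b : ℕ} {f : ℝ → ℝ} (hf : LipschitzWith 1 f) (hf0 : f 0 = 0)
    (M : Matrix (Fin a) (Fin b) ℝ) : frob (M.map f) ≤ frob M := by
  apply frob_mono
  intro i j
  have h := hf.dist_le_mul (M i j) 0
  rw [NNReal.coe_one, one_mul, Real.dist_eq, Real.dist_eq, hf0, sub_zero, sub_zero] at h
  simpa [Matrix.map_apply] using h

lemma gcn_frob_le {n : ℕ} (d : ℕ → ℕ) (φ : ℕ → ℝ → ℝ)
    (W : (ℓ : ℕ) → Matrix (Fin (d ℓ)) (Fin (d (ℓ + 1))) ℝ)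
    (hφ : ∀ ℓ, LipschitzWith 1 (φ ℓ)) (hφ0 : ∀ ℓ, φ ℓ 0 = 0)
    (A : Matrix (Fin n) (Fin n) ℝ) (hA : spec A ≤ 1)
    (X : Matrix (Fin n) (Fin (d 0)) ℝ) (ℓ : ℕ) :
    frob (gcn d φ A W X ℓ) ≤ (∏ j ∈ Finset.range ℓ, spec (W j)) * frob X := by
  induction ℓ with
  | zero => simp [gcn]
  | succ ℓ ih =>
    have h1 : frob (gcn d φ A W X (ℓ+1)) ≤ frob (A * gcn d φ A W X ℓ * W ℓ) :=
      frob_map_le (hφ (ℓ+1)) (hφ0 (ℓ+1)) _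
    have h2 : frob (A * gcn d φ A W X ℓ * W ℓ)
        ≤ spec A * frob (gcn d φ A W X ℓ) * spec (W ℓ) :=
      (frob_mul_right _ _).trans
        (mul_le_mul_of_nonneg_right (frob_mul_left _ _) (spec_nonneg _))
    have h3 : spec A * frob (gcn d φ A W X ℓ) ≤ frob (gcn d φ A W X ℓ) := by
      nlinarith [frob_nonneg (gcn d φ A W X ℓ), spec_nonneg A]
    have h4 : frob (gcn d φ A W X ℓ) * spec (W ℓ)
        ≤ (∏ j ∈ Finset.range ℓ, spec (W j)) * frob X * spec (W ℓ) :=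
      mul_le_mul_of_nonneg_right ih (spec_nonneg _)
    calc frob (gcn d φ A W X (ℓ+1))
        ≤ spec A * frob (gcn d φ A W X ℓ) * spec (W ℓ) := h1.trans h2
      _ ≤ frob (gcn d φ A W X ℓ) * spec (W ℓ) :=
          mul_le_mul_of_nonneg_right h3 (spec_nonneg _)
      _ ≤ (∏ j ∈ Finset.range ℓ, spec (W j)) * frob X * spec (W ℓ) := h4
      _ = (∏ j ∈ Finset.range (ℓ+1), spec (W j)) * frob X := by
          rw [Finset.prod_range_succ]; ring

lemma gcn_diff_le {n : ℕ} (d : ℕ → ℕ) (φ : ℕ → ℝ → ℝ)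
    (W : (ℓ : ℕ) → Matrix (Fin (d ℓ)) (Fin (d (ℓ + 1))) ℝ)
    (hφ : ∀ ℓ, LipschitzWith 1 (φ ℓ)) (hφ0 : ∀ ℓ, φ ℓ 0 = 0)
    (A A' : Matrix (Fin n) (Fin n) ℝ) (ε : ℝ)
    (hA : spec A ≤ 1) (hA' : spec A' ≤ 1) (hAA' : spec (A - A') ≤ ε) (hε : 0 ≤ ε)
    (X : Matrix (Fin n) (Fin (d 0)) ℝ) (ℓ : ℕ) :
    frob (gcn d φ A W X ℓ - gcn d φ A' W X ℓ) ≤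
      (ℓ : ℝ) * (∏ j ∈ Finset.range ℓ, spec (W j)) * ε * frob X := by
  induction ℓ with
  | zero => simp [gcn, frob]
  | succ ℓ ih =>
    set H := gcn d φ A W X ℓ with hH
    set H' := gcn d φ A' W X ℓ with hH'
    set p := ∏ j ∈ Finset.range ℓ, spec (W j) with hp
    have hp0 : 0 ≤ p := Finset.prod_nonneg fun j _ => spec_nonneg _
    have hstep1 : frob (gcn d φ A W X (ℓ+1) - gcn d φ A' W X (ℓ+1))
        ≤ frob (A * H * W ℓ - A' * H' * W ℓ) := frob_map_sub_le (hφ (ℓ+1)) _ _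
    have hsplit : A * H * W ℓ - A' * H' * W ℓ
        = ((A - A') * H) * W ℓ + (A' * (H - H')) * W ℓ := by
      simp only [Matrix.sub_mul, Matrix.mul_sub, Matrix.add_mul]
      abel
    have ha1 : frob ((A - A') * H) ≤ ε * (p * frob X) :=
      (frob_mul_left _ _).trans
        (mul_le_mul hAA' (gcn_frob_le d φ W hφ hφ0 A hA X ℓ) (frob_nonneg _) hε)
    have ha : frob (((A - A') * H) * W ℓ) ≤ ε * (p * frob X) * spec (W ℓ) :=
      (frob_mul_right _ _).trans (mul_le_mul_of_nonneg_right ha1 (spec_nonneg _))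
    have hb1 : frob (A' * (H - H')) ≤ (ℓ : ℝ) * p * ε * frob X := by
      calc frob (A' * (H - H')) ≤ spec A' * frob (H - H') := frob_mul_left _ _
        _ ≤ 1 * frob (H - H') := mul_le_mul_of_nonneg_right hA' (frob_nonneg _)
        _ = frob (H - H') := one_mul _
        _ ≤ (ℓ : ℝ) * p * ε * frob X := ih
    have hb : frob ((A' * (H - H')) * W ℓ) ≤ (ℓ : ℝ) * p * ε * frob X * spec (W ℓ) :=
      (frob_mul_right _ _).trans (mul_le_mul_of_nonneg_right hb1 (spec_nonneg _))
    calc frob (gcn d φ A W X (ℓ+1) - gcn d φ A' W X (ℓ+1))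
        ≤ frob (A * H * W ℓ - A' * H' * W ℓ) := hstep1
      _ = frob (((A - A') * H) * W ℓ + (A' * (H - H')) * W ℓ) := by rw [hsplit]
      _ ≤ frob (((A - A') * H) * W ℓ) + frob ((A' * (H - H')) * W ℓ) := frob_add_le _ _
      _ ≤ ε * (p * frob X) * spec (W ℓ) + (ℓ : ℝ) * p * ε * frob X * spec (W ℓ) :=
          add_le_add ha hb
      _ = ((ℓ+1 : ℕ) : ℝ) * (∏ j ∈ Finset.range (ℓ+1), spec (W j)) * ε * frob X := by
          rw [Finset.prod_range_succ]; push_cast; ring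

/-- Lipschitz core of Theorem 2 (structural attacks on GCNs): for an `L`-layer GCN with
1-Lipschitz activations vanishing at `0`, weight matrices of spectral norm at least `1`,
and graph-shift matrices `Ã, Ã'` of spectral norm at most `1` with `‖Ã − Ã'‖₂ ≤ ε`,
`‖F_Ã(X) − F_{Ã'}(X)‖_F ≤ (∏ ℓ, ‖W⁽ˡ⁾‖₂) · ‖X‖_F · ε · (1 + L · ∏ ℓ, ‖W⁽ˡ⁾‖₂)`. -/
theorem gcn_structural_attack_bound
    {n : ℕ} (L : ℕ) (d : ℕ → ℕ) (φ : ℕ → ℝ → ℝ)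
    (W : (ℓ : ℕ) → Matrix (Fin (d ℓ)) (Fin (d (ℓ + 1))) ℝ)
    (hφ : ∀ ℓ, LipschitzWith 1 (φ ℓ)) (hφ0 : ∀ ℓ, φ ℓ 0 = 0)
    (hW : ∀ ℓ < L, 1 ≤ spec (W ℓ))
    (A A' : Matrix (Fin n) (Fin n) ℝ) (ε : ℝ)
    (hA : spec A ≤ 1) (hA' : spec A' ≤ 1) (hAA' : spec (A - A') ≤ ε)
    (X : Matrix (Fin n) (Fin (d 0)) ℝ) :
    frob (gcn d φ A W X L - gcn d φ A' W X L) ≤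
      (∏ ℓ ∈ Finset.range L, spec (W ℓ)) * frob X * ε *
        (1 + (L : ℝ) * ∏ ℓ ∈ Finset.range L, spec (W ℓ)) := by
  have hε : 0 ≤ ε := (spec_nonneg _).trans hAA'
  set P := ∏ ℓ ∈ Finset.range L, spec (W ℓ) with hP
  have hP1 : 1 ≤ P := by
    rw [hP]
    have h := Finset.prod_le_prod (f := fun _ : ℕ => (1:ℝ)) (g := fun ℓ => spec (W ℓ))
      (s := Finset.range L) (fun _ _ => zero_le_one)
      (fun ℓ hℓ => hW ℓ (Finset.mem_range.mp hℓ))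
    simpa using h
  have hP0 : 0 ≤ P := zero_le_one.trans hP1
  have main := gcn_diff_le d φ W hφ hφ0 A A' ε hA hA' hAA' hε X L
  refine main.trans ?_
  have hX := frob_nonneg X
  have hL : (0 : ℝ) ≤ (L : ℝ) := Nat.cast_nonneg L
  nlinarith [mul_nonneg (mul_nonneg hP0 hX) hε,
    mul_nonneg (mul_nonneg (mul_nonneg (mul_nonneg hL hP0) hε) hX) (sub_nonneg.mpr hP1)]
end
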